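/- Let X be a set of n elements, S ⊆ X with |S| = k, and fix a linear order π on S. Let i ∈ X \ S be an unobserved element and j ∈ S the element at rank r in π (i.e., exactly r-1 elements of S precede j). Then the number of linear extensions σ of π to X with i <_σ j equals Σ_{s=0}^{n-k-1} V(n-k-1, s) · (s+1) · Shuf(r-1, s+1) · (n-k-s-1)! · Shuf(n-k-s-1, k-r), where V(m, s) = m!/(m-s)! is the number of s-variations of m items and Shuf(a, b) = (a+b)!/(a!·b!) is the number of shuffles of lists of lengths a and b. -/

import Mathlib

/-- `V m s = m!/(m-s)!`, the number of `s`-variations of `m` items. -/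
def V (m s : ℕ) : ℕ := m.factorial / (m - s).factorial

/-- `Shuf a b = (a+b)!/(a!·b!)`, the number of shuffles of lists of lengths `a` and `b`. -/
def Shuf (a b : ℕ) : ℕ := (a + b).factorial / (a.factorial * b.factorial)

section Aux
open Finset

lemma shuf_eq (a b : ℕ) : Shuf a b = (a+b).choose a := by
  rw [Shuf, Nat.choose_eq_factorial_div_factorial (Nat.le_add_right a b),
    Nat.add_sub_cancel_left]

lemma conv_aux (p : ℕ) : ∀ N q : ℕ,
    ∑ s ∈ Finset.range (N+1), (s+p).choose p * (N-s+q).choose q = (N+p+q+1).choose (p+q+1) := by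
  intro N
  induction N with
  | zero => intro q; simp
  | succ N ihN =>
    intro q
    induction q with
    | zero =>
      simpa using Nat.sum_range_add_choose (N+1) p
    | succ q ihq =>
      have step : ∀ s ∈ Finset.range (N+2),
          (s+p).choose p * (N+1-s+(q+1)).choose (q+1)
            = (s+p).choose p * (N+1-s+q).choose q
              + (s+p).choose p * (N+1-s+q).choose (q+1) := by
        intro s hs
        have hs' : s ≤ N+1 := by simpa [Nat.lt_succ_iff] using hs
        have : N+1-s+(q+1) = (N+1-s+q)+1 := by omega
        rw [this, Nat.choose_succ_succ, Nat.mul_add]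
      rw [Finset.sum_congr rfl step, Finset.sum_add_distrib, ihq]
      have h2 : ∑ s ∈ Finset.range (N+2), (s+p).choose p * (N+1-s+q).choose (q+1)
          = (N+p+(q+1)+1).choose (p+(q+1)+1) := by
        rw [Finset.sum_range_succ]
        have : (N+1)-(N+1)+q = q := by omega
        rw [this, Nat.choose_succ_self, Nat.mul_zero, Nat.add_zero]
        have step2 : ∀ s ∈ Finset.range (N+1),
            (s+p).choose p * (N+1-s+q).choose (q+1)
              = (s+p).choose p * (N-s+(q+1)).choose (q+1) := by
          intro s hs
          have hs' : s ≤ N := by simpa [Nat.lt_succ_iff] using hs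
          congr 2
          omega
        rw [Finset.sum_congr rfl step2, ihN (q+1)]
      rw [h2]
      rw [show N+1+p+q+1 = N+p+q+2 by ring, show N+p+(q+1)+1 = N+p+q+2 by ring,
          show p+(q+1)+1 = (p+q+1)+1 by ring, show N+1+p+(q+1)+1 = (N+p+q+2)+1 by ring]
      exact (Nat.choose_succ_succ _ _).symm
lemma rhs_eq (n k r : ℕ) (hkn : k + 1 ≤ n) (hr1 : 1 ≤ r) (hrk : r ≤ k) :
    (∑ s ∈ Finset.range (n - k),
        V (n - k - 1) s * (s + 1) * Shuf (r - 1) (s + 1)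
          * (n - k - s - 1).factorial * Shuf (n - k - s - 1) (k - r)) * (k+1).factorial
      = r * n.factorial := by
  set m := n - k with hm
  have hm1 : 1 ≤ m := by omega
  have hterm : ∀ s ∈ Finset.range m,
      V (m - 1) s * (s + 1) * Shuf (r - 1) (s + 1)
          * (m - s - 1).factorial * Shuf (m - s - 1) (k - r)
        = r * (m-1).factorial * ((s+r).choose r * ((m-1)-s+(k-r)).choose (k-r)) := by
    intro s hs
    have hsm : s ≤ m - 1 := by
      have := Finset.mem_range.1 hs; omega
    have hV : V (m-1) s = (m-1).descFactorial s :=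
      (Nat.descFactorial_eq_div hsm).symm
    have h1 : Shuf (r-1) (s+1) = (r+s).choose (r-1) := by
      rw [shuf_eq, show r-1+(s+1) = r+s by omega]
    have h2 : Shuf (m-s-1) (k-r) = ((m-1)-s+(k-r)).choose (k-r) := by
      rw [shuf_eq, show m-s-1 = (m-1)-s by omega]
      have h := Nat.choose_symm (n := (m-1)-s+(k-r)) (k := k-r) (Nat.le_add_left _ _)
      rwa [Nat.add_sub_cancel] at h
    have h3 : (m-1-s).factorial * (m-1).descFactorial s = (m-1).factorial :=
      Nat.factorial_mul_descFactorial hsm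
    have h4 : (s+1) * (r+s).choose (r-1) = (s+r).choose r * r := by
      have := Nat.choose_succ_right_eq (r+s) (r-1)
      rw [show r-1+1 = r by omega, show r+s-(r-1) = s+1 by omega] at this
      rw [show s+r = r+s by ring, mul_comm]
      exact this.symm
    rw [hV, h1, h2, show m-s-1 = m-1-s by omega]
    calc (m-1).descFactorial s * (s + 1) * (r+s).choose (r-1) * (m-1-s).factorial
          * ((m-1)-s+(k-r)).choose (k-r)
        = ((m-1-s).factorial * (m-1).descFactorial s)
            * ((s+1) * (r+s).choose (r-1)) * ((m-1)-s+(k-r)).choose (k-r) := by ring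
      _ = (m-1).factorial * ((s+r).choose r * r) * ((m-1)-s+(k-r)).choose (k-r) := by
            rw [h3, h4]
      _ = r * (m-1).factorial * ((s+r).choose r * ((m-1)-s+(k-r)).choose (k-r)) := by ring
  rw [Finset.sum_congr rfl hterm, ← Finset.mul_sum]
  have hc := conv_aux r (m-1) (k-r)
  rw [Nat.sub_add_cancel hm1] at hc
  rw [hc]
  rw [show (m-1)+r+(k-r)+1 = n by omega, show r+(k-r)+1 = k+1 by omega]
  have := Nat.choose_mul_factorial_mul_factorial hkn
  calc r * (m-1).factorial * n.choose (k+1) * (k+1).factorial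
      = r * (n.choose (k+1) * (k+1).factorial * (m-1).factorial) := by ring
    _ = r * n.factorial := by
        rw [show m-1 = n - (k+1) by omega, this]

variable {X : Type*} [DecidableEq X]

/-- The relative order pattern of `σ` on a finset `T` of cardinality `c`. -/
def pattern {n c : ℕ} (T : Finset X) (hT : T.card = c) (σ : X ≃ Fin n) :
    {x // x ∈ T} ≃ Fin c :=
  (Equiv.subtypeEquiv σ (fun x => ⟨fun h => Finset.mem_image_of_mem σ h, fun h => by
      obtain ⟨t, ht, he⟩ := Finset.mem_image.1 h
      rwa [← σ.injective he]⟩)).trans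
    ((T.image σ).orderIsoOfFin
      (by rw [Finset.card_image_of_injective _ σ.injective, hT])).symm.toEquiv

lemma pattern_lt_iff {n c : ℕ} (T : Finset X) (hT : T.card = c) (σ : X ≃ Fin n)
    (a b : {x // x ∈ T}) :
    pattern T hT σ a < pattern T hT σ b ↔ σ a < σ b := by
  simp only [pattern, Equiv.trans_apply, Equiv.subtypeEquiv_apply, OrderIso.toEquiv_symm,
    RelIso.coe_fn_toEquiv]
  exact ((T.image σ).orderIsoOfFin
    (by rw [Finset.card_image_of_injective _ σ.injective, hT])).symm.lt_iff_lt.trans Subtype.mk_lt_mk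

lemma pattern_eq_iff {n c : ℕ} (T : Finset X) (hT : T.card = c) (σ : X ≃ Fin n)
    (τ : {x // x ∈ T} ≃ Fin c) :
    pattern T hT σ = τ ↔ ∀ a b : {x // x ∈ T}, σ a < σ b ↔ τ a < τ b := by
  constructor
  · rintro rfl a b
    exact (pattern_lt_iff T hT σ a b).symm
  · intro h
    set P := pattern T hT σ with hP
    have hsm : StrictMono ⇑(P.symm.trans τ) := by
      intro u v huv
      simp only [Equiv.trans_apply]
      rw [← h]
      rw [← pattern_lt_iff T hT σ (P.symm u) (P.symm v), ← hP]
      simpa using huv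
    have hid : ⇑(P.symm.trans τ) = id := by
      have inst : WellFoundedLT (Fin c) := inferInstance
      refine ((@StrictMono.range_inj (Fin c) (Fin c) _ _ inst _ _ hsm strictMono_id).1 ?_)
      simp [Set.range_id, Equiv.range_eq_univ]
    ext t
    have h1 := congrFun hid (P t)
    have h2 : τ t = P t := by simpa using h1
    rw [h2]
/-- The permutation of `X` acting on `T` as `τ.symm ∘ τ'` and as the identity elsewhere. -/
def EP {c : ℕ} (T : Finset X) (τ τ' : {x // x ∈ T} ≃ Fin c) : Equiv.Perm X :=
  Equiv.Perm.subtypeCongr (p := fun x => x ∈ T) (τ'.trans τ.symm) (Equiv.refl _)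

lemma EP_mem {c : ℕ} (T : Finset X) (τ τ' : {x // x ∈ T} ≃ Fin c) (t : {x // x ∈ T}) :
    EP T τ τ' ↑t = ↑(τ.symm (τ' t)) := by
  rw [EP, Equiv.Perm.subtypeCongr.left_apply _ _ t.2]
  simp

lemma EP_not_mem {c : ℕ} (T : Finset X) (τ τ' : {x // x ∈ T} ≃ Fin c) (x : X) (h : x ∉ T) :
    EP T τ τ' x = x := by
  rw [EP, Equiv.Perm.subtypeCongr.right_apply _ _ h]
  rfl

lemma EP_EP {c : ℕ} (T : Finset X) (τ τ' : {x // x ∈ T} ≃ Fin c) (x : X) :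
    EP T τ τ' (EP T τ' τ x) = x := by
  by_cases h : x ∈ T
  · rw [show x = ((⟨x, h⟩ : {x // x ∈ T}) : X) from rfl, EP_mem, EP_mem]
    simp
  · rw [EP_not_mem T τ' τ x h, EP_not_mem T τ τ' x h]

lemma fiber_card [Fintype X] {n c : ℕ} (T : Finset X) (hT : T.card = c)
    (τ τ' : {x // x ∈ T} ≃ Fin c) :
    (Finset.univ.filter fun σ : X ≃ Fin n => pattern T hT σ = τ).card
      = (Finset.univ.filter fun σ : X ≃ Fin n => pattern T hT σ = τ').card := by
  have key : ∀ (τ₁ τ₂ : {x // x ∈ T} ≃ Fin c) (σ : X ≃ Fin n), pattern T hT σ = τ₁ →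
      pattern T hT ((EP T τ₁ τ₂).trans σ) = τ₂ := by
    intro τ₁ τ₂ σ h
    rw [pattern_eq_iff]
    intro a b
    have hlt := (pattern_eq_iff T hT σ τ₁).1 h
    simp only [Equiv.trans_apply]
    rw [EP_mem, EP_mem, hlt (τ₁.symm (τ₂ a)) (τ₁.symm (τ₂ b))]
    simp
  refine Finset.card_nbij' (fun σ => (EP T τ τ').trans σ) (fun σ => (EP T τ' τ).trans σ)
    ?_ ?_ ?_ ?_
  · intro σ hσ
    simp only [Finset.mem_coe, Finset.mem_filter, Finset.mem_univ, true_and] at hσ ⊢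
    exact key τ τ' σ hσ
  · intro σ hσ
    simp only [Finset.mem_coe, Finset.mem_filter, Finset.mem_univ, true_and] at hσ ⊢
    exact key τ' τ σ hσ
  · intro σ _
    ext x
    simp only [Equiv.trans_apply]
    rw [EP_EP]
  · intro σ _
    ext x
    simp only [Equiv.trans_apply]
    rw [EP_EP]
def Phi {k : ℕ} {S : Finset X} (π : {x // x ∈ S} ≃ Fin k) {i : X} (hi : i ∉ S)
    (p : Fin (k+1)) : {x // x ∈ insert i S} ≃ Fin (k+1) :=
  (Finset.subtypeInsertEquivOption hi).trans
    ((Equiv.optionCongr π).trans (finSuccEquiv' p).symm)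

lemma Phi_i {k : ℕ} {S : Finset X} (π : {x // x ∈ S} ≃ Fin k) {i : X} (hi : i ∉ S)
    (p : Fin (k+1)) : Phi π hi p ⟨i, Finset.mem_insert_self i S⟩ = p := by
  simp [Phi, Finset.subtypeInsertEquivOption]

lemma Phi_mem {k : ℕ} {S : Finset X} (π : {x // x ∈ S} ≃ Fin k) {i : X} (hi : i ∉ S)
    (p : Fin (k+1)) (a : {x // x ∈ S}) :
    Phi π hi p ⟨↑a, Finset.mem_insert_of_mem a.2⟩ = p.succAbove (π a) := by
  have hne : (a : X) ≠ i := fun h => hi (h ▸ a.2)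
  simp [Phi, Finset.subtypeInsertEquivOption, hne, finSuccEquiv'_symm_some]

lemma G_card {k : ℕ} (S : Finset X) (π : {x // x ∈ S} ≃ Fin k) (i : X) (hi : i ∉ S)
    (j : X) (hj : j ∈ S) (r : ℕ) (hr1 : 1 ≤ r) (hr : (π ⟨j, hj⟩ : ℕ) = r - 1) :
    (Finset.univ.filter fun τ : {x // x ∈ insert i S} ≃ Fin (k+1) =>
        (∀ a b : {x // x ∈ S}, π a < π b →
            τ ⟨↑a, Finset.mem_insert_of_mem a.2⟩ < τ ⟨↑b, Finset.mem_insert_of_mem b.2⟩)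
          ∧ τ ⟨i, Finset.mem_insert_self i S⟩ < τ ⟨j, Finset.mem_insert_of_mem hj⟩).card
      = r := by
  have hrk : r ≤ k := by have := (π ⟨j, hj⟩).isLt; omega
  have himg : (Finset.univ.filter fun τ : {x // x ∈ insert i S} ≃ Fin (k+1) =>
        (∀ a b : {x // x ∈ S}, π a < π b →
            τ ⟨↑a, Finset.mem_insert_of_mem a.2⟩ < τ ⟨↑b, Finset.mem_insert_of_mem b.2⟩)
          ∧ τ ⟨i, Finset.mem_insert_self i S⟩ < τ ⟨j, Finset.mem_insert_of_mem hj⟩)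
      = (Finset.univ.filter fun p : Fin (k+1) => (p : ℕ) < r).image (Phi π hi) := by
    ext τ
    simp only [Finset.mem_filter, Finset.mem_univ, true_and, Finset.mem_image]
    constructor
    · rintro ⟨h1, h2⟩
      set p := τ ⟨i, Finset.mem_insert_self i S⟩ with hp
      have hS : ∀ a : {x // x ∈ S},
          τ ⟨↑a, Finset.mem_insert_of_mem a.2⟩ = p.succAbove (π a) := by
        set f : Fin k → Fin (k+1) :=
          fun x => τ ⟨↑(π.symm x), Finset.mem_insert_of_mem (π.symm x).2⟩ with hf
        have hsm : StrictMono f := by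
          intro x y hxy
          apply h1
          simpa using hxy
        have hrange : Set.range f = Set.range (Fin.succAbove p) := by
          rw [Fin.range_succAbove]
          ext y
          simp only [Set.mem_range, Set.mem_compl_iff, Set.mem_singleton_iff]
          constructor
          · rintro ⟨x, rfl⟩ hy
            have h' := τ.injective hy
            have h'' : ((π.symm x : X)) = i := congrArg Subtype.val h'
            exact hi (h'' ▸ (π.symm x).2)
          · intro hy
            have htmem := (τ.symm y).2
            rcases Finset.mem_insert.1 htmem with hti | htS
            · exfalso
              apply hy
              have h' : τ.symm y = ⟨i, Finset.mem_insert_self i S⟩ := Subtype.ext hti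
              rw [hp, ← h', Equiv.apply_symm_apply]
            · refine ⟨π ⟨↑(τ.symm y), htS⟩, ?_⟩
              rw [hf]
              simp only [Equiv.symm_apply_apply]
              have h' : (⟨↑(⟨↑(τ.symm y), htS⟩ : {x // x ∈ S}),
                  Finset.mem_insert_of_mem (⟨↑(τ.symm y), htS⟩ : {x // x ∈ S}).2⟩
                    : {x // x ∈ insert i S}) = τ.symm y := Subtype.ext rfl
              rw [h', Equiv.apply_symm_apply]
        have inst : WellFoundedLT (Fin k) := inferInstance
        have hfs : f = p.succAbove :=
          (@StrictMono.range_inj (Fin k) (Fin (k+1)) _ _ inst _ _ hsm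
            (Fin.strictMono_succAbove p)).1 hrange
        intro a
        have h' := congrFun hfs (π a)
        rw [hf] at h'
        simpa using h'
      have hjr : τ ⟨j, Finset.mem_insert_of_mem hj⟩ = p.succAbove (π ⟨j, hj⟩) := hS ⟨j, hj⟩
      have hpr : (p : ℕ) < r := by
        rcases lt_or_ge (Fin.castSucc (π ⟨j, hj⟩)) p with hc | hc
        · rw [Fin.succAbove_of_castSucc_lt _ _ hc] at hjr
          rw [hjr] at h2
          have l1 := Fin.lt_def.1 h2
          have l2 := Fin.lt_def.1 hc
          simp only [Fin.coe_castSucc] at l1 l2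
          omega
        · rw [Fin.succAbove_of_le_castSucc _ _ hc] at hjr
          rw [hjr] at h2
          have l1 := Fin.lt_def.1 h2
          simp only [Fin.val_succ, hr] at l1
          omega
      refine ⟨p, hpr, ?_⟩
      apply Equiv.ext
      intro t
      rcases Finset.mem_insert.1 t.2 with hti | htS
      · have h' : t = ⟨i, Finset.mem_insert_self i S⟩ := Subtype.ext hti
        rw [h', Phi_i, hp]
      · have h' : t = ⟨↑(⟨↑t, htS⟩ : {x // x ∈ S}),
            Finset.mem_insert_of_mem (⟨↑t, htS⟩ : {x // x ∈ S}).2⟩ := Subtype.ext rfl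
        rw [h', Phi_mem, hS]
    · rintro ⟨p, hp, rfl⟩
      constructor
      · intro a b hab
        rw [Phi_mem, Phi_mem]
        exact Fin.strictMono_succAbove p hab
      · have hm : Phi π hi p ⟨j, Finset.mem_insert_of_mem hj⟩
            = p.succAbove (π ⟨j, hj⟩) := Phi_mem π hi p ⟨j, hj⟩
        rw [Phi_i, hm]
        have hc : p ≤ Fin.castSucc (π ⟨j, hj⟩) := by
          rw [Fin.le_def]
          simp only [Fin.coe_castSucc, hr]
          omega
        rw [Fin.succAbove_of_le_castSucc _ _ hc]
        rw [Fin.lt_def]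
        simp only [Fin.val_succ, hr]
        omega
  rw [himg, Finset.card_image_of_injOn]
  · have heq : (Finset.univ.filter fun p : Fin (k+1) => (p : ℕ) < r)
        = (Finset.univ : Finset (Fin r)).map (Fin.castLEEmb (by omega)) := by
      ext p
      simp only [Finset.mem_filter, Finset.mem_univ, true_and, Finset.mem_map,
        Fin.castLEEmb_apply]
      constructor
      · intro hpr
        exact ⟨⟨(p : ℕ), hpr⟩, by ext; simp⟩
      · rintro ⟨q, -, rfl⟩
        simpa using q.isLt
    rw [heq, Finset.card_map, Finset.card_univ, Fintype.card_fin]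
  · intro p hp q hq hpq
    have h' := congrArg (fun τ => τ ⟨i, Finset.mem_insert_self i S⟩) hpq
    simpa [Phi_i] using h'
lemma count_eq [Fintype X] (n k : ℕ) (hn : Fintype.card X = n) (S : Finset X)
    (hk : S.card = k) (π : S ≃ Fin k) (i : X) (hi : i ∉ S) (j : X) (hj : j ∈ S)
    (r : ℕ) (hr1 : 1 ≤ r) (hr : (π ⟨j, hj⟩ : ℕ) = r - 1) :
    (Finset.univ.filter
        (fun σ : X ≃ Fin n =>
          (∀ a b : S, π a < π b → σ a < σ b) ∧ σ i < σ j)).card * (k+1).factorial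
      = r * n.factorial := by
  classical
  have hT : (insert i S).card = k + 1 := by rw [Finset.card_insert_of_notMem hi, hk]
  have hcardT : Fintype.card {x // x ∈ insert i S} = k + 1 := by
    rw [Fintype.card_coe, hT]
  set τ₀ : {x // x ∈ insert i S} ≃ Fin (k+1) := Fintype.equivFinOfCardEq hcardT with hτ₀
  set c := (Finset.univ.filter
      fun σ : X ≃ Fin n => pattern (insert i S) hT σ = τ₀).card with hc
  have hfib : ∀ τ : {x // x ∈ insert i S} ≃ Fin (k+1),
      (Finset.univ.filter fun σ : X ≃ Fin n => pattern (insert i S) hT σ = τ).card = c :=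
    fun τ => fiber_card (insert i S) hT τ τ₀
  have htot : (k+1).factorial * c = n.factorial := by
    have h1 : (Finset.univ : Finset (X ≃ Fin n)).card
        = ∑ τ ∈ (Finset.univ : Finset ({x // x ∈ insert i S} ≃ Fin (k+1))),
            (Finset.univ.filter fun σ : X ≃ Fin n => pattern (insert i S) hT σ = τ).card :=
      Finset.card_eq_sum_card_fiberwise (fun σ _ => Finset.mem_univ _)
    rw [Finset.sum_congr rfl (fun τ _ => hfib τ), Finset.sum_const, smul_eq_mul] at h1
    have h2 : (Finset.univ : Finset (X ≃ Fin n)).card = n.factorial := by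
      rw [Finset.card_univ, Fintype.card_equiv (Fintype.equivFinOfCardEq hn), hn]
    have h3 : (Finset.univ : Finset ({x // x ∈ insert i S} ≃ Fin (k+1))).card
        = (k+1).factorial := by
      rw [Finset.card_univ, Fintype.card_equiv (Fintype.equivFinOfCardEq hcardT), hcardT]
    rw [h2, h3] at h1
    exact h1.symm
  have hiff : ∀ σ : X ≃ Fin n,
      ((∀ a b : S, π a < π b → σ a < σ b) ∧ σ i < σ j)
        ↔ ((∀ a b : S, π a < π b →
              pattern (insert i S) hT σ ⟨↑a, Finset.mem_insert_of_mem a.2⟩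
                < pattern (insert i S) hT σ ⟨↑b, Finset.mem_insert_of_mem b.2⟩)
            ∧ pattern (insert i S) hT σ ⟨i, Finset.mem_insert_self i S⟩
                < pattern (insert i S) hT σ ⟨j, Finset.mem_insert_of_mem hj⟩) := by
    intro σ
    constructor
    · rintro ⟨h1, h2⟩
      refine ⟨fun a b hab => ?_, ?_⟩
      · rw [pattern_lt_iff]; exact h1 a b hab
      · rw [pattern_lt_iff]; exact h2
    · rintro ⟨h1, h2⟩
      refine ⟨fun a b hab => ?_, ?_⟩
      · exact (pattern_lt_iff (insert i S) hT σ _ _).1 (h1 a b hab)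
      · exact (pattern_lt_iff (insert i S) hT σ _ _).1 h2
  have hA : (Finset.univ.filter
        (fun σ : X ≃ Fin n =>
          (∀ a b : S, π a < π b → σ a < σ b) ∧ σ i < σ j))
      = Finset.univ.filter (fun σ : X ≃ Fin n => pattern (insert i S) hT σ ∈
          (Finset.univ.filter fun τ : {x // x ∈ insert i S} ≃ Fin (k+1) =>
            (∀ a b : {x // x ∈ S}, π a < π b →
                τ ⟨↑a, Finset.mem_insert_of_mem a.2⟩ < τ ⟨↑b, Finset.mem_insert_of_mem b.2⟩)
              ∧ τ ⟨i, Finset.mem_insert_self i S⟩ < τ ⟨j, Finset.mem_insert_of_mem hj⟩)) := by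
    ext σ
    simp only [Finset.mem_filter, Finset.mem_univ, true_and]
    exact hiff σ
  rw [hA]
  have hsum : (Finset.univ.filter (fun σ : X ≃ Fin n => pattern (insert i S) hT σ ∈
        (Finset.univ.filter fun τ : {x // x ∈ insert i S} ≃ Fin (k+1) =>
          (∀ a b : {x // x ∈ S}, π a < π b →
              τ ⟨↑a, Finset.mem_insert_of_mem a.2⟩ < τ ⟨↑b, Finset.mem_insert_of_mem b.2⟩)
            ∧ τ ⟨i, Finset.mem_insert_self i S⟩ < τ ⟨j, Finset.mem_insert_of_mem hj⟩))).card
      = ∑ τ ∈ (Finset.univ.filter fun τ : {x // x ∈ insert i S} ≃ Fin (k+1) =>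
          (∀ a b : {x // x ∈ S}, π a < π b →
              τ ⟨↑a, Finset.mem_insert_of_mem a.2⟩ < τ ⟨↑b, Finset.mem_insert_of_mem b.2⟩)
            ∧ τ ⟨i, Finset.mem_insert_self i S⟩ < τ ⟨j, Finset.mem_insert_of_mem hj⟩), c := by
    rw [Finset.card_eq_sum_card_fiberwise
      (f := fun σ : X ≃ Fin n => pattern (insert i S) hT σ)
      (fun ⦃σ⦄ hσ => Finset.mem_coe.2 (Finset.mem_filter.1 (Finset.mem_coe.1 hσ)).2)]
    refine Finset.sum_congr rfl (fun τ hτ => ?_)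
    rw [← hfib τ]
    congr 1
    ext σ
    simp only [Finset.mem_filter, Finset.mem_univ, true_and]
    constructor
    · rintro ⟨_, h⟩; exact h
    · intro h
      exact ⟨by rw [h]; exact (Finset.mem_filter.1 hτ).2, h⟩
  rw [hsum, Finset.sum_const, smul_eq_mul, G_card S π i hi j hj r hr1 hr]
  calc r * c * (k+1).factorial = r * ((k+1).factorial * c) := by ring
    _ = r * n.factorial := by rw [htot]

end Aux

/-- Let `X` have `n` elements, `S ⊆ X` have `k` elements carrying a linear order `π`,
let `i ∈ X \ S` be unobserved and let `j ∈ S` have rank `r` in `π` (exactly `r-1`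
elements of `S` precede `j`).  Then the number of linear extensions `σ` of `π` to `X`
with `i <_σ j` equals
`Σ_{s=0}^{n-k-1} V(n-k-1,s) · (s+1) · Shuf(r-1, s+1) · (n-k-s-1)! · Shuf(n-k-s-1, k-r)`. -/
theorem extension_count_above {X : Type*} [Fintype X] [DecidableEq X]
    (n k : ℕ) (hn : Fintype.card X = n) (S : Finset X) (hk : S.card = k)
    (π : S ≃ Fin k) (i : X) (hi : i ∉ S) (j : X) (hj : j ∈ S)
    (r : ℕ) (hr1 : 1 ≤ r) (hr : (π ⟨j, hj⟩ : ℕ) = r - 1) :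
    (Finset.univ.filter
        (fun σ : X ≃ Fin n =>
          (∀ a b : S, π a < π b → σ a < σ b) ∧ σ i < σ j)).card
      = ∑ s ∈ Finset.range (n - k),
          V (n - k - 1) s * (s + 1) * Shuf (r - 1) (s + 1)
            * (n - k - s - 1).factorial * Shuf (n - k - s - 1) (k - r) := by
  have hkn : k + 1 ≤ n := by
    have h1 : (insert i S).card = k + 1 := by rw [Finset.card_insert_of_notMem hi, hk]
    have h2 := Finset.card_le_univ (insert i S)
    rw [h1, hn] at h2
    exact h2
  have hrk : r ≤ k := by have := (π ⟨j, hj⟩).isLt; omega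
  have h1 := count_eq n k hn S hk π i hi j hj r hr1 hr
  have h2 := rhs_eq n k r hkn hr1 hrk
  exact Nat.eq_of_mul_eq_mul_right (Nat.factorial_pos (k+1)) (h1.trans h2.symm)
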